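/- The greedy algorithm gives a p-approximation for maximum-weight independent set in a p-independent set system: if (N,I) is p-independent and w ≥ 0, then the greedy solution on any S ⊆ N has weight at least w*(S)/p. -/

import Mathlib

open Finset

/-- The weighted rank function of a set system. -/
noncomputable def wstar {α : Type*} [DecidableEq α] (I : Finset (Finset α))
    (w : α → ℝ) (S : Finset α) : ℝ :=
  (S.powerset.filter (fun T => T ∈ I)).fold max 0 (fun T => ∑ i ∈ T, w i)

/-- Greedy: process elements in the given list order, adding an element whenever
feasibility is preserved. -/
def greedyAux {α : Type*} [DecidableEq α] (I : Finset (Finset α)) :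
    List α → Finset α → Finset α
  | [], A => A
  | i :: rest, A =>
      if insert i A ∈ I then greedyAux I rest (insert i A) else greedyAux I rest A

/-- `B` is a base (maximal feasible subset) of `S`. -/
def IsBase {α : Type*} [DecidableEq α] (I : Finset (Finset α))
    (S B : Finset α) : Prop :=
  B ⊆ S ∧ B ∈ I ∧ ∀ x ∈ S \ B, insert x B ∉ I

section Aux

variable {α : Type*} [DecidableEq α]

lemma subset_greedyAux (I : Finset (Finset α)) :
    ∀ (xs : List α) (A : Finset α), A ⊆ greedyAux I xs A
  | [], A => by simp [greedyAux]
  | i :: rest, A => by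
      rw [greedyAux]
      split
      · exact (Finset.subset_insert i A).trans (subset_greedyAux I rest _)
      · exact subset_greedyAux I rest A

lemma greedyAux_subset (I : Finset (Finset α)) :
    ∀ (xs : List α) (A : Finset α), greedyAux I xs A ⊆ A ∪ xs.toFinset
  | [], A => by simp [greedyAux]
  | i :: rest, A => by
      rw [greedyAux]
      split
      · refine (greedyAux_subset I rest _).trans ?_
        intro x hx
        simp only [Finset.mem_union, Finset.mem_insert, List.toFinset_cons] at hx ⊢
        tauto
      · refine (greedyAux_subset I rest A).trans ?_
        intro x hx
        simp only [Finset.mem_union, Finset.mem_insert, List.toFinset_cons] at hx ⊢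
        tauto

lemma greedyAux_append (I : Finset (Finset α)) :
    ∀ (xs ys : List α) (A : Finset α),
      greedyAux I (xs ++ ys) A = greedyAux I ys (greedyAux I xs A)
  | [], ys, A => rfl
  | i :: xs, ys, A => by
      rw [List.cons_append, greedyAux, greedyAux]
      split <;> apply greedyAux_append

lemma greedyAux_mem (I : Finset (Finset α)) :
    ∀ (xs : List α) (A : Finset α), A ∈ I → greedyAux I xs A ∈ I
  | [], A, hA => hA
  | i :: rest, A, hA => by
      rw [greedyAux]
      split
      · exact greedyAux_mem I rest _ ‹insert i A ∈ I›
      · exact greedyAux_mem I rest A hA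

lemma exists_base (I : Finset (Finset α))
    (hdown : ∀ S T : Finset α, S ⊆ T → T ∈ I → S ∈ I) :
    ∀ (n : ℕ) (S T : Finset α), (S \ T).card ≤ n → T ∈ I → T ⊆ S →
      ∃ B, T ⊆ B ∧ IsBase I S B := by
  intro n
  induction n with
  | zero =>
      intro S T h hTI hTS
      refine ⟨T, subset_rfl, hTS, hTI, ?_⟩
      intro x hx
      rw [Finset.card_eq_zero.mp (Nat.le_zero.mp h)] at hx
      exact absurd hx (Finset.notMem_empty x)
  | succ m ih =>
      intro S T h hTI hTS
      by_cases hmax : ∀ x ∈ S \ T, insert x T ∉ I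
      · exact ⟨T, subset_rfl, hTS, hTI, hmax⟩
      · push_neg at hmax
        obtain ⟨x, hxST, hxI⟩ := hmax
        have hxS := (Finset.mem_sdiff.mp hxST).1
        have hxT := (Finset.mem_sdiff.mp hxST).2
        have hsub : insert x T ⊆ S := Finset.insert_subset hxS hTS
        have hset : S \ insert x T = (S \ T).erase x := by
          ext y
          simp only [Finset.mem_sdiff, Finset.mem_insert, Finset.mem_erase]
          tauto
        have hcard : (S \ insert x T).card ≤ m := by
          rw [hset, Finset.card_erase_of_mem hxST]
          omega
        obtain ⟨B, hB1, hB2⟩ := ih S (insert x T) hcard hxI hsub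
        exact ⟨B, (Finset.subset_insert x T).trans hB1, hB2⟩

lemma abel_id (u a : ℕ → ℝ) :
    ∀ n : ℕ, ∑ k ∈ Finset.range n, u k * (a (k + 1) - a k)
      = ∑ k ∈ Finset.range n, (u k - u (k + 1)) * a (k + 1) + u n * a n - u 0 * a 0
  | 0 => by simp
  | n + 1 => by
      rw [Finset.sum_range_succ, Finset.sum_range_succ (fun k => (u k - u (k + 1)) * a (k + 1)),
        abel_id u a n]
      ring

end Aux

/-- In a `p`-independent set system, greedy (in non-increasing weight order) is
a `p`-approximation to the maximum-weight feasible subset. -/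
theorem greedy_p_approx {α : Type*} [DecidableEq α]
    (I : Finset (Finset α)) (w : α → ℝ) (p : ℝ)
    (hp : 0 < p)
    (hw : ∀ i, 0 ≤ w i)
    (hempty : ∅ ∈ I)
    (hdown : ∀ S T : Finset α, S ⊆ T → T ∈ I → S ∈ I)
    (hpind : ∀ S B₁ B₂ : Finset α, S.Nonempty → IsBase I S B₁ → IsBase I S B₂ →
      (B₁.card : ℝ) ≤ p * B₂.card)
    (S : Finset α) (l : List α)
    (hnodup : l.Nodup) (henum : l.toFinset = S)
    (hsorted : l.Pairwise (fun a b => w b ≤ w a)) :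
    wstar I w S / p ≤ ∑ i ∈ greedyAux I l ∅, w i := by
  classical
  set G := greedyAux I l ∅ with hGdef
  set n := l.length with hn
  set g : ℕ → Finset α := fun k => greedyAux I (l.take k) ∅ with hgdef
  set u : ℕ → ℝ := fun k => if h : k < l.length then w l[k] else 0 with hudef
  have hg0 : g 0 = ∅ := by simp [hgdef, greedyAux]
  have hgI : ∀ k, g k ∈ I := fun k => greedyAux_mem I (l.take k) ∅ hempty
  have hgsub : ∀ k, g k ⊆ (l.take k).toFinset := by
    intro k
    have := greedyAux_subset I (l.take k) ∅
    simpa using this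
  have hGsub : G ⊆ S := by
    have := greedyAux_subset I l ∅
    rw [henum] at this
    simpa using this
  -- step equation for g
  have hstep : ∀ k (hk : k < n),
      g (k + 1) = if insert l[k] (g k) ∈ I then insert l[k] (g k) else g k := by
    intro k hk
    have h1 : l.take (k + 1) = l.take k ++ [l[k]] := (List.take_concat_get' l k hk).symm
    show greedyAux I (l.take (k + 1)) ∅ = _
    rw [h1, greedyAux_append]
    rw [greedyAux]
    split <;> rfl
  -- nodup facts
  have hmemtake : ∀ k (hk : k < n), l[k] ∈ (l.take (k + 1)).toFinset := by
    intro k hk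
    rw [List.mem_toFinset]
    have h1 : l.take k ++ [l[k]] = l.take (k + 1) := List.take_concat_get' l k hk
    rw [← h1]
    exact List.mem_append_right _ (List.mem_singleton_self _)
  have hnotmemtake : ∀ k (hk : k < n), l[k] ∉ (l.take k).toFinset := by
    intro k hk
    have hnd : (l.take k ++ l.drop k).Nodup := by
      rw [List.take_append_drop]; exact hnodup
    have hdisj := List.disjoint_of_nodup_append hnd
    have hmem : l[k] ∈ l.drop k := by
      rw [List.drop_eq_getElem_cons hk]
      exact List.mem_cons_self
    intro hmt
    exact hdisj (List.mem_toFinset.mp hmt) hmem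
  have hnotmemdrop : ∀ k (hk : k < n), l[k] ∉ (l.drop (k + 1)).toFinset := by
    intro k hk
    have hnd : (l.drop k).Nodup := (List.drop_sublist k l).nodup hnodup
    rw [List.drop_eq_getElem_cons hk] at hnd
    intro hmem
    exact (List.nodup_cons.mp hnd).1 (List.mem_toFinset.mp hmem)
  -- g k is a base of the prefix
  have hbase : ∀ k, IsBase I ((l.take k).toFinset) (g k) := by
    intro k
    induction k with
    | zero =>
        rw [hg0]
        refine ⟨by simp, hempty, ?_⟩
        simp
    | succ k ih =>
        by_cases hk : k < n
        · have h1 : (l.take (k + 1)).toFinset = insert l[k] ((l.take k).toFinset) := by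
            rw [← List.take_concat_get' l k hk, List.toFinset_append]
            ext y
            simp [or_comm]
          rw [hstep k hk, h1]
          by_cases hins : insert l[k] (g k) ∈ I
          · rw [if_pos hins]
            refine ⟨Finset.insert_subset_insert _ ih.1, hins, ?_⟩
            intro x hx hxI
            have hx1 := Finset.mem_sdiff.mp hx
            have hxne : x ≠ l[k] := by
              intro h; apply hx1.2; rw [h]; exact Finset.mem_insert_self _ _
            have hxP : x ∈ (l.take k).toFinset := by
              rcases Finset.mem_insert.mp hx1.1 with h | h
              · exact absurd h hxne
              · exact h
            have hxg : x ∉ g k := fun h => hx1.2 (Finset.mem_insert_of_mem h)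
            have := ih.2.2 x (Finset.mem_sdiff.mpr ⟨hxP, hxg⟩)
            apply this
            refine hdown _ _ ?_ hxI
            intro y hy
            rcases Finset.mem_insert.mp hy with h | h
            · rw [h]; exact Finset.mem_insert_self _ _
            · exact Finset.mem_insert_of_mem (Finset.mem_insert_of_mem h)
          · rw [if_neg hins]
            refine ⟨ih.1.trans (Finset.subset_insert _ _), ih.2.1, ?_⟩
            intro x hx
            have hx1 := Finset.mem_sdiff.mp hx
            rcases Finset.mem_insert.mp hx1.1 with h | h
            · rw [h]; exact hins
            · exact ih.2.2 x (Finset.mem_sdiff.mpr ⟨h, hx1.2⟩)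
        · have hle : n ≤ k := le_of_not_gt hk
          have h1 : l.take (k + 1) = l.take k := by
            rw [List.take_of_length_le hle, List.take_of_length_le (by omega)]
          have h2 : g (k + 1) = g k := by
            show greedyAux I (l.take (k + 1)) ∅ = greedyAux I (l.take k) ∅
            rw [h1]
          rw [h2, h1]
          exact ih
  -- membership in G vs in g (k+1)
  have hmemG : ∀ k (hk : k < n), (l[k] ∈ G ↔ l[k] ∈ g (k + 1)) := by
    intro k hk
    have hsplit : G = greedyAux I (l.drop (k + 1)) (g (k + 1)) := by
      rw [hGdef]
      conv_lhs => rw [← List.take_append_drop (k + 1) l]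
      rw [greedyAux_append]
    constructor
    · intro h
      rw [hsplit] at h
      have := greedyAux_subset I (l.drop (k + 1)) (g (k + 1)) h
      rcases Finset.mem_union.mp this with h1 | h1
      · exact h1
      · exact absurd h1 (hnotmemdrop k hk)
    · intro h
      rw [hsplit]
      exact subset_greedyAux I (l.drop (k + 1)) (g (k + 1)) h
  have hnotg : ∀ k (hk : k < n), l[k] ∉ g k := by
    intro k hk h
    exact hnotmemtake k hk (hgsub k h)
  -- cardinality step for g
  have hcardg : ∀ k (hk : k < n),
      (g (k + 1)).card = (g k).card + (if l[k] ∈ G then 1 else 0) := by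
    intro k hk
    by_cases hmem : l[k] ∈ G
    · have h2 : l[k] ∈ g (k + 1) := (hmemG k hk).mp hmem
      have hins : insert l[k] (g k) ∈ I := by
        by_contra hins
        rw [hstep k hk, if_neg hins] at h2
        exact hnotg k hk h2
      rw [hstep k hk, if_pos hins, Finset.card_insert_of_notMem (hnotg k hk), if_pos hmem]
    · have h2 : l[k] ∉ g (k + 1) := fun h => hmem ((hmemG k hk).mpr h)
      have hins : insert l[k] (g k) ∉ I := by
        intro hins
        rw [hstep k hk, if_pos hins] at h2
        exact h2 (Finset.mem_insert_self _ _)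
      rw [hstep k hk, if_neg hins, if_neg hmem]
      simp
  -- cardinality step for T ∩ prefix
  have hcardT : ∀ (T : Finset α) k (hk : k < n),
      (T ∩ (l.take (k + 1)).toFinset).card
        = (T ∩ (l.take k).toFinset).card + (if l[k] ∈ T then 1 else 0) := by
    intro T k hk
    have h1 : (l.take (k + 1)).toFinset = insert l[k] ((l.take k).toFinset) := by
      rw [← List.take_concat_get' l k hk, List.toFinset_append]
      ext y
      simp [or_comm]
    rw [h1]
    by_cases hmem : l[k] ∈ T
    · have h2 : T ∩ insert l[k] ((l.take k).toFinset) = insert l[k] (T ∩ (l.take k).toFinset) := by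
        ext y
        simp only [Finset.mem_inter, Finset.mem_insert]
        constructor
        · rintro ⟨hyT, hy | hy⟩
          · exact Or.inl hy
          · exact Or.inr ⟨hyT, hy⟩
        · rintro (hy | ⟨hyT, hy⟩)
          · exact ⟨hy ▸ hmem, Or.inl hy⟩
          · exact ⟨hyT, Or.inr hy⟩
      rw [h2, Finset.card_insert_of_notMem, if_pos hmem]
      intro h
      exact hnotmemtake k hk (Finset.mem_inter.mp h).2
    · have h2 : T ∩ insert l[k] ((l.take k).toFinset) = T ∩ (l.take k).toFinset := by
        ext y
        simp only [Finset.mem_inter, Finset.mem_insert]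
        constructor
        · rintro ⟨hyT, hy | hy⟩
          · exact absurd (hy ▸ hyT) hmem
          · exact ⟨hyT, hy⟩
        · rintro ⟨hyT, hy⟩
          exact ⟨hyT, Or.inr hy⟩
      rw [h2, if_neg hmem]
      simp
  -- sum over a subset T of S as a sum over indices
  have hbij : ∀ (T : Finset α), T ⊆ S →
      ∑ k ∈ Finset.range n, (if h : k < l.length then (if l[k] ∈ T then w l[k] else 0) else 0)
        = ∑ i ∈ T, w i := by
    intro T hTS
    have h1 : ∑ i ∈ T, w i = ∑ i ∈ S, (if i ∈ T then w i else 0) := by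
      rw [Finset.sum_ite_mem, Finset.inter_eq_right.mpr hTS]
    rw [h1]
    refine Finset.sum_bij (fun (k : ℕ) (hk : k ∈ Finset.range n) => l[k]'(Finset.mem_range.mp hk))
      ?_ ?_ ?_ ?_
    · intro k hk
      rw [← henum]
      exact List.mem_toFinset.mpr (List.getElem_mem _)
    · intro k₁ hk₁ k₂ hk₂ he
      exact (List.Nodup.getElem_inj_iff hnodup).mp he
    · intro b hb
      rw [← henum] at hb
      obtain ⟨i, hi, he⟩ := List.mem_iff_getElem.mp (List.mem_toFinset.mp hb)
      exact ⟨i, Finset.mem_range.mpr hi, he⟩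
    · intro k hk
      rw [dif_pos (Finset.mem_range.mp hk)]
  -- sum formula via telescoping indicators, for T ⊆ S
  have hsumT : ∀ (T : Finset α), T ⊆ S →
      ∑ i ∈ T, w i = ∑ k ∈ Finset.range n,
        u k * (((T ∩ (l.take (k + 1)).toFinset).card : ℝ)
          - ((T ∩ (l.take k).toFinset).card : ℝ)) := by
    intro T hTS
    rw [← hbij T hTS]
    refine Finset.sum_congr rfl ?_
    intro k hk
    have hkn : k < n := Finset.mem_range.mp hk
    have hu : u k = w l[k] := by rw [hudef]; exact dif_pos hkn
    rw [dif_pos hkn, hu, hcardT T k hkn]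
    push_cast
    by_cases hmem : l[k] ∈ T
    · rw [if_pos hmem, if_pos hmem]; ring
    · rw [if_neg hmem, if_neg hmem]; ring
  -- greedy sum formula
  have hsumG : ∑ i ∈ G, w i = ∑ k ∈ Finset.range n,
      u k * (((g (k + 1)).card : ℝ) - ((g k).card : ℝ)) := by
    rw [← hbij G hGsub]
    refine Finset.sum_congr rfl ?_
    intro k hk
    have hkn : k < n := Finset.mem_range.mp hk
    have hu : u k = w l[k] := by rw [hudef]; exact dif_pos hkn
    rw [dif_pos hkn, hu, hcardg k hkn]
    push_cast
    by_cases hmem : l[k] ∈ G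
    · rw [if_pos hmem, if_pos hmem]; ring
    · rw [if_neg hmem, if_neg hmem]; ring
  -- u properties
  have hu0 : ∀ k, 0 ≤ u k := by
    intro k
    rw [hudef]
    by_cases h : k < l.length
    · simpa [dif_pos h] using hw _
    · simp [dif_neg h]
  have husorted : ∀ k, u (k + 1) ≤ u k := by
    intro k
    by_cases h1 : k + 1 < l.length
    · have h0 : k < l.length := by omega
      rw [hudef]
      simp only
      rw [dif_pos h1, dif_pos h0]
      have := hsorted.rel_get_of_lt (a := ⟨k, h0⟩) (b := ⟨k + 1, h1⟩) (by simp)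
      simpa [List.get_eq_getElem] using this
    · calc u (k + 1) = 0 := by rw [hudef]; simp [dif_neg h1]
        _ ≤ u k := hu0 k
  have hun : u n = 0 := by rw [hudef]; simp [hn]
  -- key pointwise bound: |T ∩ prefix k| ≤ p * |g k| for T feasible
  have hkey : ∀ (T : Finset α), T ∈ I → ∀ k : ℕ,
      ((T ∩ (l.take k).toFinset).card : ℝ) ≤ p * ((g k).card : ℝ) := by
    intro T hT k
    by_cases hne : ((l.take k).toFinset).Nonempty
    · set Q := T ∩ (l.take k).toFinset with hQ
      have hQI : Q ∈ I := hdown Q T (Finset.inter_subset_left) hT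
      have hQsub : Q ⊆ (l.take k).toFinset := Finset.inter_subset_right
      obtain ⟨B, hQB, hB⟩ := exists_base I hdown (((l.take k).toFinset \ Q).card)
        ((l.take k).toFinset) Q le_rfl hQI hQsub
      have h1 : (Q.card : ℝ) ≤ (B.card : ℝ) := by
        exact_mod_cast Finset.card_le_card hQB
      have h2 : (B.card : ℝ) ≤ p * ((g k).card : ℝ) :=
        hpind _ B (g k) hne hB (hbase k)
      linarith
    · have hempty' : (l.take k).toFinset = ∅ := Finset.not_nonempty_iff_eq_empty.mp hne
      have hg' : g k = ∅ := Finset.subset_empty.mp (hempty' ▸ hgsub k)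
      rw [hempty', hg']
      simp
  -- bound for each feasible subset T of S
  have hmain : ∀ T : Finset α, T ∈ I → T ⊆ S →
      ∑ i ∈ T, w i ≤ p * ∑ i ∈ G, w i := by
    intro T hTI hTS
    set a : ℕ → ℝ := fun k => ((T ∩ (l.take k).toFinset).card : ℝ) with ha
    set b : ℕ → ℝ := fun k => p * ((g k).card : ℝ) with hb
    have ha0 : a 0 = 0 := by simp [ha]
    have hb0 : b 0 = 0 := by simp [hb, hg0]
    have hab : ∀ k, a k ≤ b k := fun k => hkey T hTI k
    calc ∑ i ∈ T, w i
        = ∑ k ∈ Finset.range n, u k * (a (k + 1) - a k) := hsumT T hTS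
      _ = ∑ k ∈ Finset.range n, (u k - u (k + 1)) * a (k + 1) + u n * a n - u 0 * a 0 :=
          abel_id u a n
      _ = ∑ k ∈ Finset.range n, (u k - u (k + 1)) * a (k + 1) := by
          rw [hun, ha0]; ring
      _ ≤ ∑ k ∈ Finset.range n, (u k - u (k + 1)) * b (k + 1) := by
          refine Finset.sum_le_sum ?_
          intro k _
          exact mul_le_mul_of_nonneg_left (hab (k + 1)) (sub_nonneg.mpr (husorted k))
      _ = ∑ k ∈ Finset.range n, (u k - u (k + 1)) * b (k + 1) + u n * b n - u 0 * b 0 := by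
          rw [hun, hb0]; ring
      _ = ∑ k ∈ Finset.range n, u k * (b (k + 1) - b k) := (abel_id u b n).symm
      _ = p * ∑ k ∈ Finset.range n, u k * (((g (k + 1)).card : ℝ) - ((g k).card : ℝ)) := by
          rw [Finset.mul_sum]
          refine Finset.sum_congr rfl ?_
          intro k _
          simp only [hb]
          ring
      _ = p * ∑ i ∈ G, w i := by rw [← hsumG]
  -- conclude
  have hGnonneg : 0 ≤ ∑ i ∈ G, w i := Finset.sum_nonneg fun i _ => hw i
  have hwstar : wstar I w S ≤ p * ∑ i ∈ G, w i := by
    rw [wstar, Finset.fold_max_le]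
    constructor
    · positivity
    · intro T hT
      rw [Finset.mem_filter, Finset.mem_powerset] at hT
      exact hmain T hT.2 hT.1
  rw [div_le_iff₀ hp]
  calc wstar I w S ≤ p * ∑ i ∈ G, w i := hwstar
    _ = (∑ i ∈ G, w i) * p := by ring
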